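/- arXiv:2106.14875 — 2 statements merged into one kernel-verified Lean document; each statement's English description precedes it below -/
import Mathlib

section
/- Fix an integer N ≥ 1 and the N+1 equidistant points x_i = −1 + 2i/N for i = 0, 1, …, N. Then the Gram polynomials (for parameter N) are orthonormal with respect to the discrete scalar product over these points: for all k, l with 0 ≤ k, l ≤ N, Σ_{i=0}^{N} G_k(x_i) G_l(x_i) equals 1 if k = l and equals 0 if k ≠ l. -/
set_option maxHeartbeats 2000000



/-- `gramAlpha N (m+1)` is the coefficient `α_{m,N}` from the Gram polynomial
recurrence (and `gramAlpha N 0 = α_{-1,N} = 1`):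
`α_{m,N} = (N/(m+1)) · √((4(m+1)² − 1)/((N+1)² − (m+1)²))`. -/
noncomputable def gramAlpha (N : ℕ) : ℕ → ℝ
  | 0 => 1
  | m + 1 =>
      ((N : ℝ) / (m + 1)) *
        Real.sqrt ((4 * ((m : ℝ) + 1) ^ 2 - 1) / (((N : ℝ) + 1) ^ 2 - ((m : ℝ) + 1) ^ 2))

/-- The Gram polynomials for parameter `N`: `G_0(x) = (N+1)^{-1/2}`, and
`G_{m+1}(x) = α_{m,N} x G_m(x) − γ_{m,N} G_{m-1}(x)` with `γ_{m,N} = α_{m,N}/α_{m-1,N}`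
and `G_{-1} = 0`. -/
noncomputable def gramPoly (N : ℕ) : ℕ → Polynomial ℝ
  | 0 => Polynomial.C (1 / Real.sqrt ((N : ℝ) + 1))
  | 1 => Polynomial.C (gramAlpha N 1) * Polynomial.X *
           Polynomial.C (1 / Real.sqrt ((N : ℝ) + 1))
  | m + 2 =>
      Polynomial.C (gramAlpha N (m + 2)) * Polynomial.X * gramPoly N (m + 1) -
        Polynomial.C (gramAlpha N (m + 2) / gramAlpha N (m + 1)) * gramPoly N m

namespace GramAux
open Polynomial Finset

variable {N : ℕ}

lemma alpha_zero (N : ℕ) : gramAlpha N 0 = 1 := rfl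

lemma alpha_pos (hN : 1 ≤ N) {m : ℕ} (h1 : 1 ≤ m) (h2 : m ≤ N) : 0 < gramAlpha N m := by
  obtain ⟨k, rfl⟩ : ∃ k, m = k + 1 := ⟨m - 1, (Nat.succ_pred_eq_of_pos h1).symm⟩
  have hk : ((k:ℝ) + 1) ≤ N := by exact_mod_cast h2
  have hNpos : (0:ℝ) < N := by exact_mod_cast hN
  show 0 < ((N : ℝ) / (k + 1)) * Real.sqrt _
  apply mul_pos
  · positivity
  · apply Real.sqrt_pos.2
    apply div_pos
    · nlinarith [sq_nonneg ((k:ℝ))]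
    · nlinarith

lemma alpha_sq (hN : 1 ≤ N) {m : ℕ} (h1 : 1 ≤ m) (h2 : m ≤ N) :
    gramAlpha N m ^ 2 =
      (N:ℝ)^2 * (4 * (m:ℝ)^2 - 1) / ((m:ℝ)^2 * (((N:ℝ)+1)^2 - (m:ℝ)^2)) := by
  obtain ⟨k, rfl⟩ : ∃ k, m = k + 1 := ⟨m - 1, (Nat.succ_pred_eq_of_pos h1).symm⟩
  have hk : ((k:ℝ) + 1) ≤ N := by exact_mod_cast h2
  have hNpos : (0:ℝ) < N := by exact_mod_cast hN
  have hnum : (0:ℝ) ≤ 4 * ((k : ℝ) + 1) ^ 2 - 1 := by nlinarith [sq_nonneg ((k:ℝ))]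
  have hden : (0:ℝ) < ((N : ℝ) + 1) ^ 2 - ((k : ℝ) + 1) ^ 2 := by nlinarith
  show (((N : ℝ) / (k + 1)) * Real.sqrt _)^2 = _
  rw [mul_pow, Real.sq_sqrt (by positivity)]
  push_cast
  field_simp

lemma alpha_ne (hN : 1 ≤ N) {m : ℕ} (h2 : m ≤ N) : gramAlpha N m ≠ 0 := by
  rcases Nat.eq_zero_or_pos m with rfl | h1
  · rw [alpha_zero]; norm_num
  · exact ne_of_gt (alpha_pos hN h1 h2)

/-- `GG n` is `G (n-1)` with `GG 0 = 0`. -/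
noncomputable def GG (N : ℕ) : ℕ → Polynomial ℝ
  | 0 => 0
  | n + 1 => gramPoly N n

lemma rec' (N : ℕ) (n : ℕ) :
    gramPoly N (n+1) = C (gramAlpha N (n+1)) * (X * gramPoly N n) -
      C (gramAlpha N (n+1) / gramAlpha N n) * GG N n := by
  cases n with
  | zero => simp [gramPoly, GG, mul_assoc]
  | succ m =>
      show gramPoly N (m+2) = _
      rw [gramPoly]
      show _ = _ - _ * gramPoly N m
      ring

lemma xrec (hN : 1 ≤ N) {n : ℕ} (h : n + 1 ≤ N) :
    X * gramPoly N n = C (gramAlpha N (n+1))⁻¹ * gramPoly N (n+1) +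
      C (gramAlpha N n)⁻¹ * GG N n := by
  have h1 : gramAlpha N (n+1) ≠ 0 := alpha_ne hN h
  have h2 : gramAlpha N n ≠ 0 := alpha_ne hN (le_trans (Nat.le_succ n) h)
  have e1 : (gramAlpha N (n+1))⁻¹ * gramAlpha N (n+1) = 1 := inv_mul_cancel₀ h1
  have e2 : (gramAlpha N (n+1))⁻¹ * (gramAlpha N (n+1) / gramAlpha N n) = (gramAlpha N n)⁻¹ := by
    field_simp
  rw [rec' N n, mul_sub]
  simp only [← mul_assoc, ← C_mul]
  rw [e1, e2, C_1, one_mul]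
  ring

end GramAux

namespace GramAux
open Polynomial Finset

/-- step size -/
noncomputable def hh (N : ℕ) : ℝ := 2 / N
/-- B(x) = (s+1)(N-s) where s = N(1+x)/2 -/
noncomputable def Bp (N : ℕ) : Polynomial ℝ :=
  C ((N:ℝ)/4) * ((C (N:ℝ) * (1+X) + C 2) * (1 - X))
noncomputable def Dp (N : ℕ) : Polynomial ℝ :=
  C ((N:ℝ)/4) * ((1+X) * (C (N:ℝ) * (1-X) + C 2))

noncomputable def sh (c : ℝ) (p : Polynomial ℝ) : Polynomial ℝ := p.comp (X + C c)

noncomputable def Lop (N : ℕ) (p : Polynomial ℝ) : Polynomial ℝ :=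
  Bp N * (sh (hh N) p - p) + Dp N * (sh (-(hh N)) p - p)

noncomputable def Aop (N : ℕ) (p : Polynomial ℝ) : Polynomial ℝ :=
  C (hh N) * (Bp N * sh (hh N) p - Dp N * sh (-(hh N)) p)

lemma sh_add (c : ℝ) (p q : Polynomial ℝ) : sh c (p + q) = sh c p + sh c q := add_comp
lemma sh_sub (c : ℝ) (p q : Polynomial ℝ) : sh c (p - q) = sh c p - sh c q := sub_comp
lemma sh_mul (c : ℝ) (p q : Polynomial ℝ) : sh c (p * q) = sh c p * sh c q := mul_comp p q _
lemma sh_C (c a : ℝ) : sh c (C a) = C a := C_comp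
lemma sh_X (c : ℝ) : sh c X = X + C c := X_comp
lemma sh_zero (c : ℝ) : sh c 0 = 0 := zero_comp

lemma Lop_add (N : ℕ) (p q : Polynomial ℝ) : Lop N (p + q) = Lop N p + Lop N q := by
  simp only [Lop, sh_add]; ring
lemma Lop_sub (N : ℕ) (p q : Polynomial ℝ) : Lop N (p - q) = Lop N p - Lop N q := by
  simp only [Lop, sh_sub]; ring
lemma Lop_Cmul (N : ℕ) (a : ℝ) (p : Polynomial ℝ) : Lop N (C a * p) = C a * Lop N p := by
  simp only [Lop, sh_mul, sh_C]; ring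
lemma Lop_zero (N : ℕ) : Lop N 0 = 0 := by simp [Lop, sh_zero]
lemma Lop_C (N : ℕ) (a : ℝ) : Lop N (C a) = 0 := by simp [Lop, sh_C]

lemma Aop_add (N : ℕ) (p q : Polynomial ℝ) : Aop N (p + q) = Aop N p + Aop N q := by
  simp only [Aop, sh_add]; ring
lemma Aop_sub (N : ℕ) (p q : Polynomial ℝ) : Aop N (p - q) = Aop N p - Aop N q := by
  simp only [Aop, sh_sub]; ring
lemma Aop_Cmul (N : ℕ) (a : ℝ) (p : Polynomial ℝ) : Aop N (C a * p) = C a * Aop N p := by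
  simp only [Aop, sh_mul, sh_C]; ring
lemma Aop_zero (N : ℕ) : Aop N 0 = 0 := by simp [Aop, sh_zero]

/-- key commutator identity: L(X p) = X L p + A p -/
lemma Lop_Xmul (N : ℕ) (p : Polynomial ℝ) : Lop N (X * p) = X * Lop N p + Aop N p := by
  simp only [Lop, Aop, sh_mul, sh_X, map_neg]; ring

/-- A(X p) = X A p + h^2 (L p + (B+D) p) -/
lemma Aop_Xmul (N : ℕ) (p : Polynomial ℝ) :
    Aop N (X * p) = X * Aop N p + C (hh N)^2 * (Lop N p + (Bp N + Dp N) * p) := by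
  simp only [Lop, Aop, sh_mul, sh_X, map_neg]; ring

/-- h^2 (B+D) = 2 - 2 X^2 + 4/N -/
lemma BD_sum (hN : 1 ≤ N) :
    C (hh N)^2 * (Bp N + Dp N) = C (2 + 4/(N:ℝ)) - 2 * X^2 := by
  have hN0 : (N:ℝ) ≠ 0 := by positivity
  have hu : (C ((hh N)^2) : Polynomial ℝ) * C ((N:ℝ)/4) = C (1/(N:ℝ)) := by
    rw [← C_mul]; congr 1; simp only [hh]; field_simp; ring
  have h1 : (C (1/(N:ℝ)) : Polynomial ℝ) * C (N:ℝ) = 1 := by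
    rw [← C_mul, one_div, inv_mul_cancel₀ hN0, C_1]
  have h2 : (C (1/(N:ℝ)) : Polynomial ℝ) * 2 = C (2/(N:ℝ)) := by
    rw [(map_ofNat C 2).symm, ← C_mul]; congr 1; field_simp
  have h3 : (C (2 + 4/(N:ℝ)) : Polynomial ℝ) = 2 + 2 * C (2/(N:ℝ)) := by
    have : (2 + 4/(N:ℝ)) = 2 + 2 * (2/(N:ℝ)) := by ring
    rw [this, C_add, C_mul, map_ofNat]
  simp only [Bp, Dp, ← C_pow]
  simp only [map_ofNat]
  linear_combination (2*C ((N:ℝ))*(1-X^2)+4)*hu + (2*(1-X^2))*h1 + (2:Polynomial ℝ)*h2 - h3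

/-- h (B - D) = -2 X -/
lemma BD_diff (hN : 1 ≤ N) :
    C (hh N) * (Bp N - Dp N) = -2 * X := by
  have hN0 : (N:ℝ) ≠ 0 := by positivity
  have hv : (C (hh N) : Polynomial ℝ) * C ((N:ℝ)/4) = C (1/2) := by
    rw [← C_mul]; congr 1; simp only [hh]; field_simp; ring
  have h12 : (C ((1:ℝ)/2) : Polynomial ℝ) * 4 = 2 := by
    rw [(map_ofNat C 4).symm, ← C_mul]
    norm_num
    exact map_ofNat C 2
  simp only [Bp, Dp]
  simp only [map_ofNat]
  linear_combination (-4*X)*hv + (-X)*h12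

lemma Aop_C (hN : 1 ≤ N) (a : ℝ) : Aop N (C a) = C a * (-2 * X) := by
  have : Aop N (C a) = C a * (C (hh N) * (Bp N - Dp N)) := by
    simp only [Aop, sh_C]; ring
  rw [this, BD_diff hN]

end GramAux

namespace GramAux
open Polynomial Finset

/-- `bb N m = 1 / (gramAlpha N m)^2` as a rational expression (with `bb N 0 = 0`). -/
noncomputable def bb (N : ℕ) (m : ℕ) : ℝ :=
  ((m:ℝ)^2 * (((N:ℝ)+1)^2 - (m:ℝ)^2)) / ((N:ℝ)^2 * (4*(m:ℝ)^2 - 1))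

/-- rescaled Gram polynomials -/
noncomputable def GP (N : ℕ) : ℕ → Polynomial ℝ
  | 0 => 1
  | 1 => X
  | (m+2) => X * GP N (m+1) - C (bb N (m+1)) * GP N m

noncomputable def GPP (N : ℕ) : ℕ → Polynomial ℝ
  | 0 => 0
  | (n+1) => GP N n

noncomputable def ev (n : ℕ) : ℝ := -((n:ℝ) * ((n:ℝ)+1))
noncomputable def la (n : ℕ) : ℝ := -(2*(n:ℝ)+2)
noncomputable def mu (N n : ℕ) : ℝ := (4*(n:ℝ)+2) * bb N n

lemma xrecP (N : ℕ) (n : ℕ) :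
    X * GP N n = GP N (n+1) + C (bb N n) * GPP N n := by
  cases n with
  | zero =>
      show X * 1 = X + C (bb N 0) * 0
      ring
  | succ m =>
      show X * GP N (m+1) = (X * GP N (m+1) - C (bb N (m+1)) * GP N m) + C (bb N (m+1)) * GP N m
      ring

lemma four_sq_ne (m : ℕ) : (4*(m:ℝ)^2 - 1) ≠ 0 := by
  cases m with
  | zero => norm_num
  | succ k =>
      have : (0:ℝ) ≤ (k:ℝ) := k.cast_nonneg
      push_cast
      nlinarith

/-- statement of the eigen-equation -/
def EigP (N n : ℕ) : Prop := Lop N (GP N n) = C (ev n) * GP N n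
/-- statement of the ladder relation -/
def LadP (N n : ℕ) : Prop :=
  Aop N (GP N n) = C (la n) * (X * GP N n) + C (mu N n) * GPP N n

variable {N : ℕ}

lemma Aop_Xmul' (hN : 1 ≤ N) (p : Polynomial ℝ) :
    Aop N (X * p) = X * Aop N p + C (hh N)^2 * Lop N p + (C (2 + 4/(N:ℝ)) - 2 * X^2) * p := by
  have h1 := Aop_Xmul N p
  have h2 := BD_sum (N := N) hN
  linear_combination h1 + p * h2

lemma eig_lad (hN : 1 ≤ N) : ∀ n : ℕ, (EigP N n ∧ LadP N n) := by
  have hN0 : (N:ℝ) ≠ 0 := Nat.cast_ne_zero.2 (by omega)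
  have base0 : EigP N 0 ∧ LadP N 0 := by
    constructor
    · show Lop N 1 = C (ev 0) * 1
      have h1 : (1 : Polynomial ℝ) = C 1 := C_1.symm
      rw [h1, Lop_C]
      simp [ev]
    · show Aop N 1 = C (la 0) * (X * 1) + C (mu N 0) * 0
      have h1 : (1 : Polynomial ℝ) = C 1 := C_1.symm
      rw [h1, Aop_C hN]
      have hla : la 0 = -2 := by norm_num [la]
      rw [hla]
      simp only [map_neg, map_ofNat, mul_zero, add_zero]
      ring
  have base1 : EigP N 1 ∧ LadP N 1 := by
    constructor
    · show Lop N X = C (ev 1) * X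
      have hL : Lop N X = C (hh N) * (Bp N - Dp N) := by
        simp only [Lop, sh_X, map_neg]; ring
      rw [hL, BD_diff hN]
      have hev : ev 1 = -2 := by norm_num [ev]
      rw [hev]
      simp [map_neg, map_ofNat]
    · show Aop N X = C (la 1) * (X * X) + C (mu N 1) * GPP N 1
      have expand : Aop N X = X * (C (hh N) * (Bp N - Dp N)) + C (hh N)^2 * (Bp N + Dp N) := by
        simp only [Aop, sh_X, map_neg]; ring
      rw [expand, BD_diff hN, BD_sum hN]
      have hla : la 1 = -4 := by norm_num [la]
      have hmu : mu N 1 = 2 + 4/(N:ℝ) := by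
        simp only [mu, bb]
        push_cast
        field_simp
        ring
      rw [hla, hmu]
      show _ = _ + _ * (1 : Polynomial ℝ)
      simp [map_neg, map_ofNat]
      ring
  have step : ∀ m : ℕ, (EigP N m ∧ LadP N m) → (EigP N (m+1) ∧ LadP N (m+1)) →
      (EigP N (m+2) ∧ LadP N (m+2)) := by
    intro m ⟨ihE0, ihA0⟩ ⟨ihE1, ihA1⟩
    have hrec : GP N (m+2) = X * GP N (m+1) - C (bb N (m+1)) * GP N m := rfl
    have hGPP1 : GPP N (m+1) = GP N m := rfl
    have hGPP2 : GPP N (m+2) = GP N (m+1) := rfl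
    simp only [EigP, LadP] at ihE0 ihA0 ihE1 ihA1 ⊢
    rw [hGPP1] at ihA1
    rw [hGPP2, hrec]
    constructor
    · -- eigen step
      rw [Lop_sub, Lop_Cmul, Lop_Xmul, ihE1, ihA1, ihE0]
      apply Polynomial.funext
      intro y
      simp only [eval_add, eval_sub, eval_mul, eval_C, eval_X, ev, la, mu]
      push_cast
      ring
    · -- ladder step
      rw [Aop_sub, Aop_Cmul, Aop_Xmul' hN, ihA1, ihE1, ihA0]
      rw [show X * (C (la (m+1)) * (X * GP N (m+1)) + C (mu N (m+1)) * GP N m)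
            = C (la (m+1)) * (X * (X * GP N (m+1))) + C (mu N (m+1)) * (X * GP N m) from by ring]
      rw [show X * (X * GP N (m+1) - C (bb N (m+1)) * GP N m)
            = X * (X * GP N (m+1)) - C (bb N (m+1)) * (X * GP N m) from by ring]
      rw [xrecP N m]
      apply Polynomial.funext
      intro y
      simp only [eval_add, eval_sub, eval_mul, eval_C, eval_X, eval_pow, eval_ofNat,
        ev, la, mu, bb, hh]
      have d0 := four_sq_ne m
      have d1 := four_sq_ne (m+1)
      have d2 := four_sq_ne (m+2)
      push_cast at d0 d1 d2 ⊢
      ring_nf at d0 d1 d2 ⊢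
      field_simp
      ring
  intro n
  induction n using Nat.twoStepInduction with
  | zero => exact base0
  | one => exact base1
  | more k ih1 ih2 => exact step k ih1 ih2

end GramAux

namespace GramAux
open Polynomial Finset

variable {N : ℕ}

noncomputable def pt (N s : ℕ) : ℝ := -1 + 2*(s:ℝ)/N
noncomputable def S (N : ℕ) (p q : Polynomial ℝ) : ℝ :=
  ∑ s ∈ range (N+1), p.eval (pt N s) * q.eval (pt N s)

lemma pt_succ (s : ℕ) : pt N (s+1) = pt N s + hh N := by
  simp only [pt, hh]
  push_cast
  ring

lemma pt_zero : pt N 0 = -1 := by simp [pt]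

lemma pt_last (hN : 1 ≤ N) : pt N N = 1 := by
  have hN0 : (N:ℝ) ≠ 0 := Nat.cast_ne_zero.2 (by omega)
  simp only [pt]
  field_simp
  norm_num

lemma Dp_eval_neg_one : (Dp N).eval (-1) = 0 := by simp [Dp]

lemma Bp_eval_one : (Bp N).eval 1 = 0 := by simp [Bp]

lemma DB_eval (hN : 1 ≤ N) (y : ℝ) : (Dp N).eval (y + hh N) = (Bp N).eval y := by
  have hN0 : (N:ℝ) ≠ 0 := Nat.cast_ne_zero.2 (by omega)
  simp only [Dp, Bp, hh, eval_mul, eval_add, eval_sub, eval_C, eval_X, eval_one]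
  field_simp
  ring

lemma eval_sh (c : ℝ) (p : Polynomial ℝ) (y : ℝ) : (sh c p).eval y = p.eval (y + c) := by
  simp [sh, eval_comp]

/-- the summation-by-parts / reindexing lemma -/
lemma Tlem (hN : 1 ≤ N) (p q : Polynomial ℝ) :
    ∑ s ∈ range (N+1), (Dp N).eval (pt N s) * (p.eval (pt N s - hh N) * q.eval (pt N s)) =
    ∑ s ∈ range (N+1), (Bp N).eval (pt N s) * (p.eval (pt N s) * q.eval (pt N s + hh N)) := by
  rw [Finset.sum_range_succ' (fun s => (Dp N).eval (pt N s) * (p.eval (pt N s - hh N) * q.eval (pt N s))) N]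
  rw [Finset.sum_range_succ (fun s => (Bp N).eval (pt N s) * (p.eval (pt N s) * q.eval (pt N s + hh N))) N]
  rw [pt_zero, pt_last hN, Dp_eval_neg_one, Bp_eval_one]
  simp only [zero_mul, mul_zero, add_zero]
  apply Finset.sum_congr rfl
  intro i _
  rw [pt_succ, DB_eval hN]
  ring_nf

lemma S_Lexpand (hN : 1 ≤ N) (p q : Polynomial ℝ) :
    S N (Lop N p) q =
      (∑ s ∈ range (N+1), (Bp N).eval (pt N s) * (p.eval (pt N s + hh N) * q.eval (pt N s))) +
      (∑ s ∈ range (N+1), (Bp N).eval (pt N s) * (p.eval (pt N s) * q.eval (pt N s + hh N))) -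
      ∑ s ∈ range (N+1), ((Bp N).eval (pt N s) + (Dp N).eval (pt N s)) *
        (p.eval (pt N s) * q.eval (pt N s)) := by
  have hterm : ∀ s : ℕ, (Lop N p).eval (pt N s) * q.eval (pt N s) =
      (Bp N).eval (pt N s) * (p.eval (pt N s + hh N) * q.eval (pt N s)) +
      (Dp N).eval (pt N s) * (p.eval (pt N s - hh N) * q.eval (pt N s)) -
      ((Bp N).eval (pt N s) + (Dp N).eval (pt N s)) * (p.eval (pt N s) * q.eval (pt N s)) := by
    intro s
    simp only [Lop, eval_add, eval_mul, eval_sub, eval_neg, eval_sh, sub_eq_add_neg]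
    ring
  unfold S
  rw [Finset.sum_congr rfl (fun s _ => hterm s), Finset.sum_sub_distrib, Finset.sum_add_distrib,
    Tlem hN p q]

lemma S_Aexpand (hN : 1 ≤ N) (p q : Polynomial ℝ) :
    S N (Aop N p) q =
      hh N * ((∑ s ∈ range (N+1), (Bp N).eval (pt N s) * (p.eval (pt N s + hh N) * q.eval (pt N s))) -
      (∑ s ∈ range (N+1), (Bp N).eval (pt N s) * (p.eval (pt N s) * q.eval (pt N s + hh N)))) := by
  have hterm : ∀ s : ℕ, (Aop N p).eval (pt N s) * q.eval (pt N s) =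
      hh N * ((Bp N).eval (pt N s) * (p.eval (pt N s + hh N) * q.eval (pt N s)) -
      (Dp N).eval (pt N s) * (p.eval (pt N s - hh N) * q.eval (pt N s))) := by
    intro s
    simp only [Aop, eval_add, eval_mul, eval_sub, eval_neg, eval_C, eval_sh, sub_eq_add_neg]
    ring
  unfold S
  rw [Finset.sum_congr rfl (fun s _ => hterm s), ← Finset.mul_sum, Finset.sum_sub_distrib,
    Tlem hN p q]

lemma S_Lsym (hN : 1 ≤ N) (p q : Polynomial ℝ) : S N (Lop N p) q = S N p (Lop N q) := by
  have h1 := S_Lexpand hN p q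
  have h2 := S_Lexpand hN q p
  have hsym : S N p (Lop N q) = S N (Lop N q) p := by
    unfold S; exact Finset.sum_congr rfl (fun s _ => mul_comm _ _)
  have hW : (∑ s ∈ range (N+1), ((Bp N).eval (pt N s) + (Dp N).eval (pt N s)) *
        (q.eval (pt N s) * p.eval (pt N s))) =
      (∑ s ∈ range (N+1), ((Bp N).eval (pt N s) + (Dp N).eval (pt N s)) *
        (p.eval (pt N s) * q.eval (pt N s))) :=
    Finset.sum_congr rfl (fun s _ => by ring)
  have c1 : (∑ s ∈ range (N+1), (Bp N).eval (pt N s) * (q.eval (pt N s + hh N) * p.eval (pt N s))) =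
      (∑ s ∈ range (N+1), (Bp N).eval (pt N s) * (p.eval (pt N s) * q.eval (pt N s + hh N))) :=
    Finset.sum_congr rfl (fun s _ => by ring)
  have c2 : (∑ s ∈ range (N+1), (Bp N).eval (pt N s) * (q.eval (pt N s) * p.eval (pt N s + hh N))) =
      (∑ s ∈ range (N+1), (Bp N).eval (pt N s) * (p.eval (pt N s + hh N) * q.eval (pt N s))) :=
    Finset.sum_congr rfl (fun s _ => by ring)
  rw [hsym, h1, h2, hW, c1, c2]
  ring

lemma S_Askew (hN : 1 ≤ N) (p q : Polynomial ℝ) : S N (Aop N p) q = - S N p (Aop N q) := by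
  have h1 := S_Aexpand hN p q
  have h2 := S_Aexpand hN q p
  have hsym : S N p (Aop N q) = S N (Aop N q) p := by
    unfold S; exact Finset.sum_congr rfl (fun s _ => mul_comm _ _)
  have c1 : (∑ s ∈ range (N+1), (Bp N).eval (pt N s) * (q.eval (pt N s + hh N) * p.eval (pt N s))) =
      (∑ s ∈ range (N+1), (Bp N).eval (pt N s) * (p.eval (pt N s) * q.eval (pt N s + hh N))) :=
    Finset.sum_congr rfl (fun s _ => by ring)
  have c2 : (∑ s ∈ range (N+1), (Bp N).eval (pt N s) * (q.eval (pt N s) * p.eval (pt N s + hh N))) =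
      (∑ s ∈ range (N+1), (Bp N).eval (pt N s) * (p.eval (pt N s + hh N) * q.eval (pt N s))) :=
    Finset.sum_congr rfl (fun s _ => by ring)
  rw [hsym, h1, h2, c1, c2]
  ring

lemma S_comm (p q : Polynomial ℝ) : S N p q = S N q p := by
  unfold S; exact Finset.sum_congr rfl (fun s _ => mul_comm _ _)

lemma S_Cmul_left (c : ℝ) (p q : Polynomial ℝ) : S N (C c * p) q = c * S N p q := by
  unfold S
  rw [Finset.mul_sum]
  exact Finset.sum_congr rfl (fun s _ => by simp only [eval_mul, eval_C, eval_X]; ring)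

lemma S_Cmul_right (c : ℝ) (p q : Polynomial ℝ) : S N p (C c * q) = c * S N p q := by
  rw [S_comm, S_Cmul_left, S_comm]

lemma S_add_left (p q r : Polynomial ℝ) : S N (p + q) r = S N p r + S N q r := by
  unfold S
  rw [← Finset.sum_add_distrib]
  exact Finset.sum_congr rfl (fun s _ => by simp only [eval_add]; ring)

lemma S_zero_left (q : Polynomial ℝ) : S N 0 q = 0 := by
  unfold S; simp

lemma S_Xswap (p q : Polynomial ℝ) : S N (X * p) q = S N p (X * q) := by
  unfold S
  exact Finset.sum_congr rfl (fun s _ => by simp only [eval_mul, eval_C, eval_X]; ring)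

lemma ev_inj {k l : ℕ} (h : k ≠ l) : ev k ≠ ev l := by
  rcases Nat.lt_or_ge k l with hlt | hge
  · have : (k:ℝ) < l := by exact_mod_cast hlt
    have hk : (0:ℝ) ≤ k := k.cast_nonneg
    simp only [ev]
    intro hc
    nlinarith
  · have hlt : l < k := by omega
    have : (l:ℝ) < k := by exact_mod_cast hlt
    have hl : (0:ℝ) ≤ l := l.cast_nonneg
    simp only [ev]
    intro hc
    nlinarith

lemma orthP (hN : 1 ≤ N) {k l : ℕ} (h : k ≠ l) : S N (GP N k) (GP N l) = 0 := by
  have e1 := (eig_lad hN k).1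
  have e2 := (eig_lad hN l).1
  unfold EigP at e1 e2
  have hs := S_Lsym hN (GP N k) (GP N l)
  rw [e1, e2, S_Cmul_left, S_Cmul_right] at hs
  have := ev_inj h
  have hfac : (ev k - ev l) * S N (GP N k) (GP N l) = 0 := by linarith
  rcases mul_eq_zero.1 hfac with h' | h'
  · exact absurd (by linarith : ev k = ev l) this
  · exact h'

lemma orthGPP (hN : 1 ≤ N) (n : ℕ) : S N (GPP N n) (GP N (n+1)) = 0 := by
  cases n with
  | zero => exact S_zero_left _
  | succ m => exact orthP hN (by omega)

lemma normstep (hN : 1 ≤ N) (n : ℕ) :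
    S N (GP N (n+1)) (GP N (n+1)) = bb N (n+1) * S N (GP N n) (GP N n) := by
  have hA0 := (eig_lad hN n).2
  have hA1 := (eig_lad hN (n+1)).2
  unfold LadP at hA0 hA1
  rw [show GPP N (n+1) = GP N n from rfl] at hA1
  have hskew := S_Askew hN (GP N n) (GP N (n+1))
  rw [hA0, hA1, S_add_left, S_Cmul_left, S_Cmul_left, orthGPP hN n] at hskew
  rw [S_comm (GP N n), S_add_left, S_Cmul_left, S_Cmul_left] at hskew
  have hT : S N (X * GP N (n+1)) (GP N n) = S N (X * GP N n) (GP N (n+1)) := by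
    rw [S_Xswap, S_comm]
  rw [hT] at hskew
  have hx : S N (X * GP N n) (GP N (n+1)) = S N (GP N (n+1)) (GP N (n+1)) := by
    rw [xrecP N n, S_add_left, S_Cmul_left, orthGPP hN n]
    ring
  rw [hx] at hskew
  have hla : la n = -(2*(n:ℝ)+2) := rfl
  have hla1 : la (n+1) = -(2*(n:ℝ)+4) := by simp only [la]; push_cast; ring
  have hmu1 : mu N (n+1) = (4*(n:ℝ)+6) * bb N (n+1) := by simp only [mu]; push_cast; ring
  rw [hla, hla1, hmu1] at hskew
  have h46 : (4*(n:ℝ)+6) ≠ 0 := by positivity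
  have key : (4*(n:ℝ)+6) * (S N (GP N (n+1)) (GP N (n+1))) =
      (4*(n:ℝ)+6) * (bb N (n+1) * S N (GP N n) (GP N n)) := by
    linear_combination - hskew
  exact mul_left_cancel₀ h46 key

end GramAux

namespace GramAux
open Polynomial Finset

variable {N : ℕ}

noncomputable def cc (N : ℕ) : ℕ → ℝ
  | 0 => 1 / Real.sqrt ((N:ℝ)+1)
  | n + 1 => gramAlpha N (n+1) * cc N n

lemma binv (hN : 1 ≤ N) {m : ℕ} (h1 : 1 ≤ m) (h2 : m ≤ N) :
    bb N m * (gramAlpha N m)^2 = 1 := by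
  have hN0 : (N:ℝ) ≠ 0 := Nat.cast_ne_zero.2 (by omega)
  have hm0 : (m:ℝ) ≠ 0 := Nat.cast_ne_zero.2 (by omega)
  have hmN : (m:ℝ) ≤ N := by exact_mod_cast h2
  have hden : ((N:ℝ)+1)^2 - (m:ℝ)^2 ≠ 0 := by
    have : (0:ℝ) < ((N:ℝ)+1)^2 - (m:ℝ)^2 := by nlinarith [Nat.cast_nonneg (α := ℝ) m]
    linarith
  have h4 := four_sq_ne m
  rw [alpha_sq hN h1 h2, bb]
  field_simp
  exact div_self (by contrapose! h4; linarith)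

lemma GtoP (hN : 1 ≤ N) : ∀ n, n ≤ N → gramPoly N n = C (cc N n) * GP N n := by
  intro n
  induction n using Nat.twoStepInduction with
  | zero =>
      intro _
      show gramPoly N 0 = C (cc N 0) * 1
      rw [mul_one]
      rfl
  | one =>
      intro _
      show gramPoly N 1 = C (cc N 1) * X
      show C (gramAlpha N 1) * X * C (cc N 0) = _
      rw [show cc N 1 = gramAlpha N 1 * cc N 0 from rfl, C_mul]
      ring
  | more m ih0 ih1 =>
      intro hm2
      have hm1 : m + 1 ≤ N := by omega
      have hmm : m ≤ N := by omega
      have e1 := ih1 hm1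
      have e0 := ih0 hmm
      have ha1 : gramAlpha N (m+1) ≠ 0 := alpha_ne hN hm1
      have hb := binv hN (by omega : 1 ≤ m+1) hm1
      have hdiv : gramAlpha N (m+2) / gramAlpha N (m+1) =
          gramAlpha N (m+2) * gramAlpha N (m+1) * bb N (m+1) := by
        rw [div_eq_iff ha1]
        linear_combination (- gramAlpha N (m+2)) * hb
      show gramPoly N (m+2) = C (cc N (m+2)) * GP N (m+2)
      rw [gramPoly, e0, e1, hdiv]
      rw [show cc N (m+2) = gramAlpha N (m+2) * (gramAlpha N (m+1) * cc N m) from rfl]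
      rw [show GP N (m+2) = X * GP N (m+1) - C (bb N (m+1)) * GP N m from rfl]
      rw [show cc N (m+1) = gramAlpha N (m+1) * cc N m from rfl]
      simp only [C_mul]
      ring

lemma S_one : S N 1 1 = (N:ℝ) + 1 := by
  unfold S
  simp

lemma normP (hN : 1 ≤ N) : ∀ n, n ≤ N → (cc N n)^2 * S N (GP N n) (GP N n) = 1 := by
  intro n
  induction n with
  | zero =>
      intro _
      show (cc N 0)^2 * S N 1 1 = 1
      rw [S_one]
      have hpos : (0:ℝ) < (N:ℝ) + 1 := by positivity
      rw [show cc N 0 = 1 / Real.sqrt ((N:ℝ)+1) from rfl]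
      rw [div_pow, one_pow, Real.sq_sqrt (le_of_lt hpos)]
      field_simp
  | succ m ih =>
      intro hm1
      have hmm : m ≤ N := by omega
      have e := ih hmm
      have hb := binv hN (by omega : 1 ≤ m+1) hm1
      rw [normstep hN m]
      rw [show cc N (m+1) = gramAlpha N (m+1) * cc N m from rfl]
      nlinarith [e, hb]

lemma final (hN : 1 ≤ N) {k l : ℕ} (hk : k ≤ N) (hl : l ≤ N) :
    S N (gramPoly N k) (gramPoly N l) = if k = l then 1 else 0 := by
  rw [GtoP hN k hk, GtoP hN l hl, S_Cmul_left, S_Cmul_right]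
  by_cases h : k = l
  · subst h
    rw [if_pos rfl]
    have := normP hN k hk
    linear_combination this
  · rw [if_neg h, orthP hN h]
    ring

end GramAux

/-- For `N ≥ 1`, the Gram polynomials `G_0, …, G_N` are orthonormal with respect to
the discrete scalar product over the `N+1` equidistant points `x_i = −1 + 2i/N`. -/
theorem stmt_8 (N : ℕ) (hN : 1 ≤ N) (x : Fin (N + 1) → ℝ)
    (hx : ∀ i : Fin (N + 1), x i = -1 + 2 * (i : ℝ) / N)
    (k l : Fin (N + 1)) :
    ∑ i, (gramPoly N k).eval (x i) * (gramPoly N l).eval (x i) =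
      if k = l then 1 else 0 := by
  have hpt : ∀ i : Fin (N+1), x i = GramAux.pt N i := by
    intro i
    rw [hx i]
    rfl
  have hsum : ∑ i, (gramPoly N k).eval (x i) * (gramPoly N l).eval (x i) =
      GramAux.S N (gramPoly N k) (gramPoly N l) := by
    unfold GramAux.S
    rw [← Fin.sum_univ_eq_sum_range (fun s => (gramPoly N k).eval (GramAux.pt N s) *
      (gramPoly N l).eval (GramAux.pt N s)) (N+1)]
    exact Finset.sum_congr rfl (fun i _ => by rw [hpt i])
  rw [hsum]
  have hk : (k:ℕ) ≤ N := by omega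
  have hl : (l:ℕ) ≤ N := by omega
  rw [GramAux.final hN hk hl]
  congr 1
  simp [Fin.ext_iff]
end

section
/- Fix an integer N ≥ 1, let x_i = −1 + 2i/N for i = 0, …, N, and fix an integer M with 0 ≤ M ≤ N. Define the moments b_j = ∫_{−1}^{1} G_j(x) dx and the Gram quadrature weights w*_i = Σ_{j=0}^{M} b_j G_j(x_i). Then the sum of the Gram quadrature weights equals 2: Σ_{i=0}^{N} w*_i = 2. -/
/-- Recurrence coefficient of the monic-normalized Gram polynomials. -/
noncomputable def gq (N m : ℕ) : ℝ :=
  (m : ℝ) ^ 2 * (((N : ℝ) + 1) ^ 2 - (m : ℝ) ^ 2) / ((4 * (m : ℝ) ^ 2 - 1) * (N : ℝ) ^ 2)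

/-- Monic-normalized Gram polynomials, as real functions. -/
noncomputable def vv (N : ℕ) : ℕ → ℝ → ℝ
  | 0 => fun _ => 1
  | 1 => fun t => t
  | m + 2 => fun t => t * vv N (m + 1) t - gq N (m + 1) * vv N m t

lemma gq_zero (N : ℕ) : gq N 0 = 0 := by simp [gq]

lemma vv_rec (N m : ℕ) (t : ℝ) :
    vv N (m + 1) t = t * vv N m t - gq N m * vv N (m - 1) t := by
  match m with
  | 0 => simp [vv, gq_zero]
  | m + 1 => rfl

lemma gq_id (N k : ℕ) (hN : 1 ≤ N) (hk : 1 ≤ k) :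
    (2 * (k : ℝ) + 3) * (N : ℝ) ^ 2 * gq N (k + 1)
      = (2 * (k : ℝ) - 1) * (N : ℝ) ^ 2 * gq N k - 2 * (k : ℝ) * ((k : ℝ) + 1)
        + (N : ℝ) ^ 2 + 2 * (N : ℝ) := by
  have hk1 : (1 : ℝ) ≤ (k : ℝ) := by exact_mod_cast hk
  have hN0 : (N : ℝ) ≠ 0 := by
    have : (1:ℝ) ≤ (N:ℝ) := by exact_mod_cast hN
    linarith
  have h1 : (4 * (k : ℝ) ^ 2 - 1) ≠ 0 := by nlinarith
  have h2 : (4 * ((k : ℝ) + 1) ^ 2 - 1) ≠ 0 := by nlinarith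
  simp only [gq, Nat.cast_add, Nat.cast_one]
  have h1' : ((k : ℝ) ^ 2 * 4 - 1) ≠ 0 := by nlinarith
  have h2' : (((k : ℝ) + 1) ^ 2 * 4 - 1) ≠ 0 := by nlinarith
  field_simp
  ring

/-- The discrete Sturm–Liouville relations for the monic Gram polynomials. -/
lemma SL (N : ℕ) (hN : 1 ≤ N) : ∀ m : ℕ, ∀ t : ℝ,
    (((N:ℝ)*(t+1)/2 + 1) * ((N:ℝ)*(1-t)/2) * (vv N m (t + 2/(N:ℝ)) - vv N m t)
       - ((N:ℝ)*(t+1)/2) * ((N:ℝ)*(1-t)/2 + 1) * (vv N m t - vv N m (t - 2/(N:ℝ)))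
      = -((m:ℝ) * ((m:ℝ)+1)) * vv N m t) ∧
    (((N:ℝ)*(t+1)/2 + 1) * ((N:ℝ)*(1-t)/2) * (vv N m (t + 2/(N:ℝ)) - vv N m t)
       + ((N:ℝ)*(t+1)/2) * ((N:ℝ)*(1-t)/2 + 1) * (vv N m t - vv N m (t - 2/(N:ℝ)))
      = -((m:ℝ) * (N:ℝ)) * vv N (m+1) t
        + (N:ℝ) * ((m:ℝ)+1) * gq N m * vv N (m-1) t) := by
  have hN0 : (N : ℝ) ≠ 0 := by
    have : (1:ℝ) ≤ (N:ℝ) := by exact_mod_cast hN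
    linarith
  intro m
  induction m using Nat.strong_induction_on with
  | _ m ih =>
    match m with
    | 0 =>
      intro t
      constructor
      · norm_num [vv]
      · norm_num [vv, gq_zero]
    | 1 =>
      intro t
      have h2 : vv N 2 t = t * vv N 1 t - gq N 1 * vv N 0 t := rfl
      constructor
      · simp only [vv]
        push_cast
        field_simp
        ring
      · rw [show (1:ℕ) + 1 = 2 from rfl, h2]
        simp only [vv, gq, show vv N 0 t = 1 from rfl]
        push_cast
        field_simp
        ring
    | m + 2 =>
      intro t
      have hH0 := (ih m (by omega) t).1
      have hJ0 := (ih m (by omega) t).2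
      have hH1 := (ih (m+1) (by omega) t).1
      have hJ1 := (ih (m+1) (by omega) t).2
      have hREC := vv_rec N m t
      have hg := gq_id N (m+1) hN (by omega)
      rw [show m + 1 + 1 = m + 2 from rfl] at hJ1 hg
      rw [vv_rec N (m+1) t, show m + 1 - 1 = m from rfl] at hJ1
      have e2 : ∀ x : ℝ, vv N (m+2) x = x * vv N (m+1) x - gq N (m+1) * vv N m x := by
        intro x
        rw [vv_rec N (m+1) x, show m + 1 - 1 = m from rfl]
      push_cast at hH0 hJ0 hH1 hJ1 hg ⊢
      constructor
      · rw [e2 (t + 2/(N:ℝ)), e2 (t - 2/(N:ℝ)), e2 t]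
        linear_combination (norm := (field_simp; ring1))
          t * hH1 + 2/(N:ℝ) * hJ1 - gq N (m+1) * hH0
      · rw [show m + 2 + 1 = (m+1) + 2 from rfl,
            e2 (t + 2/(N:ℝ)), e2 (t - 2/(N:ℝ))]
        have e3 : vv N (m+1+2) t = t * vv N (m+2) t - gq N (m+2) * vv N (m+1) t := rfl
        rw [e3, e2 t]
        linear_combination (norm := (field_simp; ring1))
          t * hJ1 + 2/(N:ℝ) * hH1 - gq N (m+1) * hJ0
          - ((m:ℝ)+1) * (N:ℝ) * gq N (m+1) * hREC
          - (vv N (m+1) t / (N:ℝ)) * hg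

/-- Telescoping auxiliary function. -/
noncomputable def tF (N m : ℕ) : ℕ → ℝ := fun i =>
  (i:ℝ) * ((N:ℝ) + 1 - (i:ℝ)) *
    (vv N m (-1 + 2*(i:ℝ)/(N:ℝ)) - vv N m (-1 + 2*((i:ℝ)-1)/(N:ℝ)))

lemma sum_vv (N m : ℕ) (hN : 1 ≤ N) (hm : 1 ≤ m) :
    ∑ i ∈ Finset.range (N+1), vv N m (-1 + 2*(i:ℝ)/(N:ℝ)) = 0 := by
  have hN0 : (N:ℝ) ≠ 0 := by
    have : (1:ℝ) ≤ (N:ℝ) := by exact_mod_cast hN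
    linarith
  have key : ∀ i ∈ Finset.range (N+1),
      tF N m (i+1) - tF N m i
        = -((m:ℝ)*((m:ℝ)+1)) * vv N m (-1 + 2*(i:ℝ)/(N:ℝ)) := by
    intro i _
    have h := (SL N hN m (-1 + 2*(i:ℝ)/(N:ℝ))).1
    have e1 : (-1 + 2*(i:ℝ)/(N:ℝ)) + 2/(N:ℝ) = -1 + 2*((i:ℝ)+1)/(N:ℝ) := by ring
    have e2 : (-1 + 2*(i:ℝ)/(N:ℝ)) - 2/(N:ℝ) = -1 + 2*((i:ℝ)-1)/(N:ℝ) := by ring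
    rw [e1, e2] at h
    simp only [tF]
    push_cast
    simp only [add_sub_cancel_right]
    linear_combination (norm := (field_simp; ring1)) h
  have tele := Finset.sum_range_sub (tF N m) (N+1)
  have h1 : ∑ i ∈ Finset.range (N+1), (tF N m (i+1) - tF N m i)
      = ∑ i ∈ Finset.range (N+1),
          -((m:ℝ)*((m:ℝ)+1)) * vv N m (-1 + 2*(i:ℝ)/(N:ℝ)) :=
    Finset.sum_congr rfl key
  rw [tele] at h1
  have hF0 : tF N m 0 = 0 := by simp [tF]
  have hFN : tF N m (N+1) = 0 := by
    simp only [tF]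
    push_cast
    ring
  rw [hF0, hFN, ← Finset.mul_sum] at h1
  have hm1 : (1:ℝ) ≤ (m:ℝ) := by exact_mod_cast hm
  have hl : -((m:ℝ)*((m:ℝ)+1)) ≠ 0 := by nlinarith
  have h2 := h1.symm
  rw [sub_zero] at h2
  rcases mul_eq_zero.mp h2 with h | h
  · exact absurd h hl
  · exact h

lemma alpha_sq (N j : ℕ) (hN : 1 ≤ N) (hjN : j + 1 ≤ N) :
    gramAlpha N (j+1) ^ 2 * gq N (j+1) = 1 := by
  have hN0 : (N:ℝ) ≠ 0 := by
    have : (1:ℝ) ≤ (N:ℝ) := by exact_mod_cast hN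
    linarith
  have hj0 : ((j:ℝ)+1) ≠ 0 := by positivity
  have hjnn : (0:ℝ) ≤ (j:ℝ) := Nat.cast_nonneg j
  have hnum : (0:ℝ) < 4*((j:ℝ)+1)^2 - 1 := by nlinarith
  have hle : ((j:ℝ)+1) ≤ (N:ℝ) := by exact_mod_cast hjN
  have hden : (0:ℝ) < ((N:ℝ)+1)^2 - ((j:ℝ)+1)^2 := by nlinarith
  have harg : 0 ≤ (4*((j:ℝ)+1)^2 - 1)/(((N:ℝ)+1)^2 - ((j:ℝ)+1)^2) := by positivity
  simp only [gramAlpha]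
  rw [mul_pow, Real.sq_sqrt harg]
  simp only [gq]
  push_cast
  have hnum' : (((j : ℝ) + 1) ^ 2 * 4 - 1) ≠ 0 := by nlinarith
  field_simp

lemma alpha_ne (N j : ℕ) (hN : 1 ≤ N) (hjN : j + 1 ≤ N) : gramAlpha N (j+1) ≠ 0 := by
  intro h
  have := alpha_sq N j hN hjN
  rw [h] at this
  norm_num at this

/-- Normalization constants. -/
noncomputable def kap (N m : ℕ) : ℝ :=
  (∏ j ∈ Finset.range m, gramAlpha N (j+1)) / Real.sqrt ((N:ℝ)+1)

lemma gram_eq (N : ℕ) (hN : 1 ≤ N) :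
    ∀ m, m ≤ N → ∀ t : ℝ, (gramPoly N m).eval t = kap N m * vv N m t := by
  intro m
  induction m using Nat.strong_induction_on with
  | _ m ih =>
    match m with
    | 0 => intro _ t; simp [gramPoly, kap, vv]
    | 1 =>
      intro _ t
      simp only [gramPoly, Polynomial.eval_mul, Polynomial.eval_C, Polynomial.eval_X,
        kap, Finset.prod_range_one, vv]
      ring
    | m + 2 =>
      intro hm t
      have h1 := ih (m+1) (by omega) (by omega) t
      have h0 := ih m (by omega) (by omega) t
      have hsq := alpha_sq N m hN (by omega)
      have hne := alpha_ne N m hN (by omega)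
      have e2 : vv N (m+2) t = t * vv N (m+1) t - gq N (m+1) * vv N m t := rfl
      simp only [gramPoly, Polynomial.eval_sub, Polynomial.eval_mul, Polynomial.eval_C,
        Polynomial.eval_X]
      rw [h1, h0, e2]
      have hk2 : kap N (m+2) = kap N (m+1) * gramAlpha N (m+2) := by
        simp only [kap, Finset.prod_range_succ, show m+1+1 = m+2 from rfl]
        ring
      have hk1 : kap N (m+1) = kap N m * gramAlpha N (m+1) := by
        simp only [kap, Finset.prod_range_succ]
        ring
      rw [hk2, hk1]
      linear_combination (norm := (field_simp; ring1))
        (kap N m * gramAlpha N (m+2) * vv N m t / gramAlpha N (m+1)) * hsq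

/-- For `N ≥ 1`, `M ≤ N`, equidistant points `x_i = −1 + 2i/N`, moments
`b_j = ∫_{−1}^{1} G_j`, and Gram quadrature weights `w*_i = ∑ j, b_j G_j(x_i)`,
the sum of the weights equals `2`. -/
theorem stmt_13 (N M : ℕ) (hN : 1 ≤ N) (hM : M ≤ N)
    (x : Fin (N + 1) → ℝ) (hx : ∀ i : Fin (N + 1), x i = -1 + 2 * (i : ℝ) / N)
    (b : Fin (M + 1) → ℝ) (hb : ∀ j, b j = ∫ t in (-1 : ℝ)..1, (gramPoly N j).eval t)
    (w : Fin (N + 1) → ℝ) (hw : ∀ i, w i = ∑ j, b j * (gramPoly N j).eval (x i)) :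
    ∑ i, w i = 2 := by
  classical
  have hN0 : (N:ℝ) ≠ 0 := by
    have : (1:ℝ) ≤ (N:ℝ) := by exact_mod_cast hN
    linarith
  have hs : Real.sqrt ((N:ℝ)+1) * Real.sqrt ((N:ℝ)+1) = (N:ℝ)+1 :=
    Real.mul_self_sqrt (by positivity)
  have hsne : Real.sqrt ((N:ℝ)+1) ≠ 0 := by
    intro h0
    rw [h0, mul_zero] at hs
    have : (0:ℝ) < (N:ℝ)+1 := by positivity
    linarith
  have hswap : ∑ i, w i = ∑ j, b j * ∑ i, (gramPoly N (j:ℕ)).eval (x i) := by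
    calc ∑ i, w i = ∑ i, ∑ j, b j * (gramPoly N (j:ℕ)).eval (x i) :=
          Finset.sum_congr rfl fun i _ => hw i
      _ = ∑ j, ∑ i, b j * (gramPoly N (j:ℕ)).eval (x i) := Finset.sum_comm
      _ = ∑ j, b j * ∑ i, (gramPoly N (j:ℕ)).eval (x i) :=
          Finset.sum_congr rfl fun j _ => (Finset.mul_sum _ _ _).symm
  rw [hswap]
  have hzero : ∀ j : Fin (M+1), j ≠ 0 →
      b j * ∑ i, (gramPoly N (j:ℕ)).eval (x i) = 0 := by
    intro j hj
    have hj1 : 1 ≤ (j:ℕ) := by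
      rcases Nat.eq_zero_or_pos (j:ℕ) with h | h
      · exact absurd (Fin.ext (by simp [h])) hj
      · exact h
    have hjN : (j:ℕ) ≤ N := le_trans (Nat.lt_succ_iff.mp j.isLt) hM
    have hsum0 : ∑ i, (gramPoly N (j:ℕ)).eval (x i) = 0 := by
      have e : ∀ i : Fin (N+1), (gramPoly N (j:ℕ)).eval (x i)
          = kap N (j:ℕ) * vv N (j:ℕ) (-1 + 2*((i:ℕ):ℝ)/(N:ℝ)) := by
        intro i
        rw [hx i]
        exact gram_eq N hN (j:ℕ) hjN _
      rw [Finset.sum_congr rfl (fun i _ => e i), ← Finset.mul_sum]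
      have hfn : ∑ i : Fin (N+1), vv N (j:ℕ) (-1 + 2*((i:ℕ):ℝ)/(N:ℝ))
          = ∑ i ∈ Finset.range (N+1), vv N (j:ℕ) (-1 + 2*(i:ℝ)/(N:ℝ)) :=
        Fin.sum_univ_eq_sum_range (fun i => vv N (j:ℕ) (-1 + 2*(i:ℝ)/(N:ℝ))) (N+1)
      rw [hfn, sum_vv N (j:ℕ) hN hj1, mul_zero]
    rw [hsum0, mul_zero]
  rw [Finset.sum_eq_single (0 : Fin (M+1)) (fun j _ hj => hzero j hj)
      (fun h => absurd (Finset.mem_univ _) h)]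
  have h00 : ((0 : Fin (M+1)) : ℕ) = 0 := rfl
  have hb0 : b 0 = 2 * (1 / Real.sqrt ((N:ℝ)+1)) := by
    rw [hb 0, h00]
    simp only [gramPoly, Polynomial.eval_C]
    rw [intervalIntegral.integral_const]
    norm_num
  have hS0 : ∑ i : Fin (N+1), (gramPoly N ((0 : Fin (M+1)):ℕ)).eval (x i)
      = ((N:ℝ)+1) * (1/Real.sqrt ((N:ℝ)+1)) := by
    rw [h00]
    simp only [gramPoly, Polynomial.eval_C, Finset.sum_const, Finset.card_univ,
      Fintype.card_fin, nsmul_eq_mul]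
    push_cast
    ring
  rw [hb0, hS0]
  field_simp
  rw [Real.sq_sqrt (by positivity)]
end
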